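/- Let n : [−1,1] → ℝ² be continuously differentiable with |n(t)| = 1 for all t ∈ [−1,1], n(−1) = (0,1) and n(1) = (0,−1). Then ∫_{−1}^{1} |n'(t)|² dt ≥ π²/2. -/

import Mathlib

open Set MeasureTheory intervalIntegral Real


/-- a continuously differentiable unit-vector path `n : [−1,1] → 𝕊¹ ⊂ ℝ²`
joining `(0,1)` to `(0,−1)` satisfies `∫_{−1}^{1} |n'(t)|² dt ≥ π²/2`. -/
theorem stmt14 (n n' : ℝ → EuclideanSpace ℝ (Fin 2))
    (hderiv : ∀ t ∈ Set.Icc (-1 : ℝ) 1, HasDerivWithinAt n (n' t) (Set.Icc (-1) 1) t)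
    (hcont : ContinuousOn n' (Set.Icc (-1) 1))
    (hunit : ∀ t ∈ Set.Icc (-1 : ℝ) 1, ‖n t‖ = 1)
    (hstart : n (-1) 0 = 0 ∧ n (-1) 1 = 1)
    (hend : n 1 0 = 0 ∧ n 1 1 = -1) :
    Real.pi ^ 2 / 2 ≤ ∫ t in (-1 : ℝ)..1, ‖n' t‖ ^ 2 := by
  obtain ⟨hs0, hs1⟩ := hstart
  obtain ⟨he0, he1⟩ := hend
  have h11 : (-1:ℝ) ≤ 1 := by norm_num
  have hmem1 : (1:ℝ) ∈ Icc (-1:ℝ) 1 := by constructor <;> norm_num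
  have hmemm1 : (-1:ℝ) ∈ Icc (-1:ℝ) 1 := by constructor <;> norm_num
  have hUS : UniqueDiffOn ℝ (Icc (-1:ℝ) 1) := uniqueDiffOn_Icc (by norm_num)
  have hnormsq : ∀ x : EuclideanSpace ℝ (Fin 2), ‖x‖^2 = x 0^2 + x 1^2 := by
    intro x
    rw [EuclideanSpace.norm_eq, Real.sq_sqrt (Finset.sum_nonneg fun i _ => sq_nonneg _)]
    simp [Fin.sum_univ_two, sq_abs]
  -- coordinate derivatives
  have ha : ∀ t ∈ Icc (-1:ℝ) 1, HasDerivWithinAt (fun t => n t 0) (n' t 0) (Icc (-1) 1) t := by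
    intro t ht
    exact
      (EuclideanSpace.proj (0 : Fin 2)).hasFDerivAt.comp_hasDerivWithinAt t (hderiv t ht)
  have hb : ∀ t ∈ Icc (-1:ℝ) 1, HasDerivWithinAt (fun t => n t 1) (n' t 1) (Icc (-1) 1) t := by
    intro t ht
    exact
      (EuclideanSpace.proj (1 : Fin 2)).hasFDerivAt.comp_hasDerivWithinAt t (hderiv t ht)
  have hunit' : ∀ t ∈ Icc (-1:ℝ) 1, (n t 0)^2 + (n t 1)^2 = 1 := by
    intro t ht
    rw [← hnormsq, hunit t ht]; norm_num
  -- orthogonality n ⟂ n'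
  have horth : ∀ t ∈ Icc (-1:ℝ) 1, n t 0 * n' t 0 + n t 1 * n' t 1 = 0 := by
    intro t ht
    have h1 : HasDerivWithinAt (fun t => (n t 0)^2 + (n t 1)^2)
        ((n' t 0) * n t 0 + n t 0 * n' t 0 + ((n' t 1) * n t 1 + n t 1 * n' t 1))
        (Icc (-1) 1) t := by
      have := (((ha t ht).mul (ha t ht)).add ((hb t ht).mul (hb t ht)))
      simp only [sq]; exact this
    have h2 : HasDerivWithinAt (fun t => (n t 0)^2 + (n t 1)^2) 0 (Icc (-1:ℝ) 1) t :=
      (hasDerivWithinAt_const t _ (1:ℝ)).congr (fun y hy => hunit' y hy) (hunit' t ht)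
    have e1 := h1.derivWithin (hUS t ht)
    have e2 := h2.derivWithin (hUS t ht)
    rw [e2] at e1
    linarith [e1]
  -- continuity of coordinates
  have hca : ContinuousOn (fun t => n t 0) (Icc (-1:ℝ) 1) :=
    fun t ht => (ha t ht).continuousWithinAt
  have hcb : ContinuousOn (fun t => n t 1) (Icc (-1:ℝ) 1) :=
    fun t ht => (hb t ht).continuousWithinAt
  have hca' : ContinuousOn (fun t => n' t 0) (Icc (-1:ℝ) 1) := by
    have := (EuclideanSpace.proj (0 : Fin 2)).continuous.comp_continuousOn hcont
    exact this
  have hcb' : ContinuousOn (fun t => n' t 1) (Icc (-1:ℝ) 1) := by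
    have := (EuclideanSpace.proj (1 : Fin 2)).continuous.comp_continuousOn hcont
    exact this
  -- clamp
  set c : ℝ → ℝ := fun t => max (-1) (min 1 t) with hcdef
  have hccont : Continuous c := continuous_const.max (continuous_const.min continuous_id)
  have hcS : ∀ t, c t ∈ Icc (-1:ℝ) 1 := by
    intro t
    constructor
    · exact le_max_left _ _
    · exact max_le (by norm_num) (min_le_left _ _)
  have hceq : ∀ t ∈ Icc (-1:ℝ) 1, c t = t := by
    intro t ht
    simp only [hcdef]
    rw [min_eq_right ht.2, max_eq_right ht.1]
  -- angular speed
  set w : ℝ → ℝ := fun t => n (c t) 0 * n' (c t) 1 - n (c t) 1 * n' (c t) 0 with hwdef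
  have hwcont : Continuous w := by
    have h0 : Continuous fun t => n (c t) 0 := hca.comp_continuous hccont hcS
    have h1 : Continuous fun t => n (c t) 1 := hcb.comp_continuous hccont hcS
    have h0' : Continuous fun t => n' (c t) 0 := hca'.comp_continuous hccont hcS
    have h1' : Continuous fun t => n' (c t) 1 := hcb'.comp_continuous hccont hcS
    exact (h0.mul h1').sub (h1.mul h0')
  have hwS : ∀ t ∈ Icc (-1:ℝ) 1, w t = n t 0 * n' t 1 - n t 1 * n' t 0 := by
    intro t ht; simp only [hwdef, hceq t ht]
  -- the angle
  set θ : ℝ → ℝ := fun t => Real.pi/2 + ∫ s in (-1:ℝ)..t, w s with hθdef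
  have hθd : ∀ t : ℝ, HasDerivAt θ (w t) t := by
    intro t
    have h := intervalIntegral.integral_hasDerivAt_right
      (hwcont.intervalIntegrable (-1) t)
      (hwcont.stronglyMeasurable.stronglyMeasurableAtFilter)
      hwcont.continuousAt
    exact h.const_add _
  have hθcont : Continuous θ := by
    refine continuous_iff_continuousAt.2 fun t => (hθd t).continuousAt
  have hθm1 : θ (-1) = Real.pi/2 := by simp [hθdef]
  -- F and G constant
  set F : ℝ → ℝ := fun t => n t 0 * Real.cos (θ t) + n t 1 * Real.sin (θ t) with hFdef
  set G : ℝ → ℝ := fun t => n t 0 * Real.sin (θ t) - n t 1 * Real.cos (θ t) with hGdef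
  have hcosd : ∀ t, HasDerivWithinAt (fun t => Real.cos (θ t))
      (-Real.sin (θ t) * w t) (Icc (-1:ℝ) 1) t := fun t =>
    (Real.hasDerivAt_cos (θ t)).comp_hasDerivWithinAt t (hθd t).hasDerivWithinAt
  have hsind : ∀ t, HasDerivWithinAt (fun t => Real.sin (θ t))
      (Real.cos (θ t) * w t) (Icc (-1:ℝ) 1) t := fun t =>
    (Real.hasDerivAt_sin (θ t)).comp_hasDerivWithinAt t (hθd t).hasDerivWithinAt
  have hFd : ∀ t ∈ Icc (-1:ℝ) 1, HasDerivWithinAt F 0 (Icc (-1:ℝ) 1) t := by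
    intro t ht
    have h := ((ha t ht).mul (hcosd t)).add ((hb t ht).mul (hsind t))
    refine h.congr_deriv (Eq.symm ?_)
    rw [hwS t ht]
    have h1 := hunit' t ht
    have h2 := horth t ht
    set A := n t 0; set B := n t 1; set A' := n' t 0; set B' := n' t 1
    set C := Real.cos (θ t); set Sn := Real.sin (θ t)
    linear_combination (-(C*A + Sn*B)) * h2 + (C*A' + Sn*B') * h1
  have hGd : ∀ t ∈ Icc (-1:ℝ) 1, HasDerivWithinAt G 0 (Icc (-1:ℝ) 1) t := by
    intro t ht
    have h := ((ha t ht).mul (hsind t)).sub ((hb t ht).mul (hcosd t))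
    refine h.congr_deriv (Eq.symm ?_)
    rw [hwS t ht]
    have h1 := hunit' t ht
    have h2 := horth t ht
    set A := n t 0; set B := n t 1; set A' := n' t 0; set B' := n' t 1
    set C := Real.cos (θ t); set Sn := Real.sin (θ t)
    linear_combination (-(Sn*A - C*B)) * h2 + (Sn*A' - C*B') * h1
  have hFcont : ContinuousOn F (Icc (-1:ℝ) 1) :=
    (hca.mul ((Real.continuous_cos.comp hθcont).continuousOn)).add (hcb.mul ((Real.continuous_sin.comp hθcont).continuousOn))
  have hGcont : ContinuousOn G (Icc (-1:ℝ) 1) :=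
    (hca.mul ((Real.continuous_sin.comp hθcont).continuousOn)).sub (hcb.mul ((Real.continuous_cos.comp hθcont).continuousOn))
  have hFconst : ∀ x ∈ Icc (-1:ℝ) 1, F x = F (-1) := by
    apply constant_of_has_deriv_right_zero hFcont
    intro x hx
    exact (hFd x (Ico_subset_Icc_self hx)).mono_of_mem_nhdsWithin (Icc_mem_nhdsGE_of_mem hx)
  have hGconst : ∀ x ∈ Icc (-1:ℝ) 1, G x = G (-1) := by
    apply constant_of_has_deriv_right_zero hGcont
    intro x hx
    exact (hGd x (Ico_subset_Icc_self hx)).mono_of_mem_nhdsWithin (Icc_mem_nhdsGE_of_mem hx)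
  -- evaluate
  have hFm1 : F (-1) = 1 := by
    simp [hFdef, hs0, hs1, hθm1]
  have hF1 : Real.sin (θ 1) = -1 := by
    have := hFconst 1 hmem1
    rw [hFm1] at this
    simp only [hFdef, he0, he1] at this
    linarith
  -- θ 1 = -π/2 + 2kπ  ⇒  |θ 1 - π/2| ≥ π
  obtain ⟨k, hk⟩ := Real.sin_eq_neg_one_iff.1 hF1
  have hwint : (∫ s in (-1:ℝ)..1, w s) = θ 1 - Real.pi/2 := by simp [hθdef]
  have hπpos := Real.pi_pos
  have habs : Real.pi ≤ |∫ s in (-1:ℝ)..1, w s| := by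
    rw [hwint, ← hk]
    have : -(Real.pi / 2) + ↑k * (2 * Real.pi) - Real.pi / 2 = (2*(k:ℝ) - 1) * Real.pi := by
      ring
    rw [this, abs_mul, abs_of_pos hπpos]
    have h1 : (1:ℝ) ≤ |2*(k:ℝ) - 1| := by
      have : (2*(k:ℝ) - 1) = ((2*k - 1 : ℤ) : ℝ) := by push_cast; ring
      rw [this, ← Int.cast_abs]
      have : (1:ℤ) ≤ |2*k - 1| := Int.one_le_abs (by omega)
      exact_mod_cast this
    nlinarith
  -- |w| ≤ ‖n'‖ pointwise on Icc
  have hwle : ∀ x ∈ Icc (-1:ℝ) 1, |w x| ≤ ‖n' x‖ := by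
    intro x hx
    have hsq : w x ^ 2 ≤ ‖n' x‖ ^ 2 := by
      rw [hwS x hx, hnormsq (n' x)]
      nlinarith [hunit' x hx, sq_nonneg (n x 0 * n' x 0 + n x 1 * n' x 1),
        sq_nonneg (n' x 0), sq_nonneg (n' x 1)]
    have := Real.sqrt_le_sqrt hsq
    rwa [Real.sqrt_sq_eq_abs, Real.sqrt_sq (norm_nonneg _)] at this
  -- integrability
  have hnint : IntervalIntegrable (fun t => ‖n' t‖) volume (-1:ℝ) 1 := by
    apply ContinuousOn.intervalIntegrable
    rw [uIcc_of_le h11]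
    exact hcont.norm
  have hnint2 : IntervalIntegrable (fun t => ‖n' t‖^2) volume (-1:ℝ) 1 := by
    apply ContinuousOn.intervalIntegrable
    rw [uIcc_of_le h11]
    exact (hcont.norm).pow 2
  -- π ≤ ∫ ‖n'‖
  have hπle : Real.pi ≤ ∫ t in (-1:ℝ)..1, ‖n' t‖ := by
    calc Real.pi ≤ |∫ s in (-1:ℝ)..1, w s| := habs
    _ ≤ ∫ s in (-1:ℝ)..1, |w s| := intervalIntegral.abs_integral_le_integral_abs h11
    _ ≤ ∫ t in (-1:ℝ)..1, ‖n' t‖ := by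
        apply intervalIntegral.integral_mono_on h11 _ hnint hwle
        exact (hwcont.abs).intervalIntegrable _ _
  -- Cauchy–Schwarz finish
  set I := ∫ t in (-1:ℝ)..1, ‖n' t‖ with hIdef
  set J := ∫ t in (-1:ℝ)..1, ‖n' t‖^2 with hJdef
  have hkey : 0 ≤ ∫ t in (-1:ℝ)..1, (‖n' t‖ - I/2)^2 :=
    intervalIntegral.integral_nonneg h11 fun u _ => sq_nonneg _
  have hexp : (∫ t in (-1:ℝ)..1, (‖n' t‖ - I/2)^2) = J - I*I + I^2/2 := by
    have heq : (fun t => (‖n' t‖ - I/2)^2)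
        = fun t => ‖n' t‖^2 - I * ‖n' t‖ + I^2/4 := by
      funext t; ring
    rw [heq]
    rw [intervalIntegral.integral_add ((hnint2).sub (hnint.const_mul I))
      intervalIntegrable_const]
    rw [intervalIntegral.integral_sub hnint2 (hnint.const_mul I)]
    rw [intervalIntegral.integral_const_mul, intervalIntegral.integral_const]
    simp only [← hIdef, ← hJdef]
    norm_num
    ring
  rw [hexp] at hkey
  nlinarith [hπle, hπpos]
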